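/- Let q* be an extreme point of the CMDP linear-program feasible set F. Then the number of triples (h,x,a) with q*_h(x,a) ≠ 0 is at most H·|S| + N. -/

import Mathlib

set_option maxHeartbeats 1000000 in
theorem extremePoint_support_card_le
    (S A : Type) [Fintype S] [Fintype A] [DecidableEq S]
    (H N : ℕ) (hH : 1 ≤ H) (xini : S)
    (P : ℕ → S → A → S → ℝ)
    (hPnonneg : ∀ h, h + 1 < H → ∀ x a x', 0 ≤ P h x a x')
    (hPsum : ∀ h, h + 1 < H → ∀ x a, ∑ x' : S, P h x a x' = 1)
    (g : Fin N → Fin H → S → A → ℝ) (ρ : Fin N → ℝ)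
    (F : Set (Fin H → S → A → ℝ))
    (hF : F = {q | (∀ h x a, 0 ≤ q h x a) ∧
      (∀ n : Fin N, ρ n ≤ ∑ h : Fin H, ∑ x : S, ∑ a : A, q h x a * g n h x a) ∧
      (∀ h : Fin H, ∀ hh : (h : ℕ) + 1 < H, ∀ x : S,
        ∑ a : A, q ⟨(h : ℕ) + 1, hh⟩ x a
          = ∑ x' : S, ∑ a' : A, P h x' a' x * q h x' a') ∧
      (∑ a : A, q ⟨0, by omega⟩ xini a = 1 ∧
        ∀ x : S, x ≠ xini → ∑ a : A, q ⟨0, by omega⟩ x a = 0)})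
    (qstar : Fin H → S → A → ℝ)
    (hqstar : qstar ∈ Set.extremePoints ℝ F) :
    Set.ncard {p : Fin H × S × A | qstar p.1 p.2.1 p.2.2 ≠ 0}
      ≤ H * Fintype.card S + N := by
  classical
  by_contra hcon
  push_neg at hcon
  have hqF := hqstar.1
  rw [hF] at hqF
  obtain ⟨hq0, hqρ, hqflow, hqini⟩ := hqF
  -- support finset
  set supp : Finset (Fin H × S × A) :=
    Finset.univ.filter (fun p : Fin H × S × A => qstar p.1 p.2.1 p.2.2 ≠ 0) with hsupp
  have hcard : H * Fintype.card S + N + 1 ≤ supp.card := by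
    rw [Set.ncard_eq_toFinset_card'] at hcon
    have he : {p : Fin H × S × A | qstar p.1 p.2.1 p.2.2 ≠ 0}.toFinset = supp := by
      ext p; simp [hsupp]
    rw [he] at hcon; omega
  obtain ⟨T', hT'sub, hT'card⟩ := Finset.exists_subset_card_eq hcard
  -- matrices
  set M : Matrix ((Fin H × S) ⊕ Fin N) (Fin H × S × A) ℝ := fun r p =>
    match r with
    | .inl (h, x) =>
        (if p.1 = h then (if p.2.1 = x then (1:ℝ) else 0) else 0)
          - (if (h:ℕ) = (p.1:ℕ) + 1 then P p.1 p.2.1 p.2.2 x else 0)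
    | .inr n => g n p.1 p.2.1 p.2.2 with hM
  set E : Matrix (Fin H × S × A) T' ℝ := fun p t => if (t : Fin H × S × A) = p then 1 else 0 with hE
  set Ψ : (T' → ℝ) →ₗ[ℝ] ((Fin H × S) ⊕ Fin N → ℝ) := M.mulVecLin.comp E.mulVecLin with hΨ
  have hninj : ¬ Function.Injective Ψ := by
    intro hinj
    have hle := LinearMap.finrank_le_finrank_of_injective hinj
    rw [Module.finrank_pi, Module.finrank_pi] at hle
    simp [Fintype.card_coe, hT'card] at hle
  rw [Function.not_injective_iff] at hninj
  obtain ⟨c₁, c₂, hceq, hcne⟩ := hninj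
  set c : T' → ℝ := c₁ - c₂ with hc
  have hΨc : Ψ c = 0 := by rw [hc, map_sub, hceq, sub_self]
  have hcne0 : c ≠ 0 := sub_ne_zero_of_ne hcne
  set d : Fin H × S × A → ℝ := E.mulVec c with hd
  have hdspec : ∀ p, d p = if hp : p ∈ T' then c ⟨p, hp⟩ else 0 := by
    intro p
    rw [hd]
    unfold Matrix.mulVec dotProduct
    split
    · next hp =>
      rw [Finset.sum_eq_single (⟨p, hp⟩ : T')]
      · simp [hE]
      · intro t _ ht
        simp only [hE]
        rw [if_neg, zero_mul]
        intro h; apply ht; exact Subtype.ext h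
      · simp
    · next hp =>
      apply Finset.sum_eq_zero
      intro t _
      simp only [hE]
      rw [if_neg, zero_mul]
      intro h; exact hp (h ▸ t.2)
  have hdzero : ∀ p, p ∉ T' → d p = 0 := by
    intro p hp; rw [hdspec]; simp [hp]
  have hdne : ∃ p, d p ≠ 0 := by
    by_contra hall
    push_neg at hall
    apply hcne0
    funext t
    have := hall t
    rw [hdspec] at this
    simpa [t.2] using this
  have hMd : M.mulVec d = 0 := by
    have : Ψ c = M.mulVec (E.mulVec c) := by
      simp [hΨ, Matrix.mulVecLin_apply]
    rw [this] at hΨc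
    exact hΨc
  -- row facts
  have hrow : ∀ (h : Fin H) (x : S),
      (∑ h' : Fin H, ∑ x' : S, ∑ a' : A,
        ((if h' = h then (if x' = x then (1:ℝ) else 0) else 0)
          - (if (h:ℕ) = (h':ℕ) + 1 then P h' x' a' x else 0)) * d (h', x', a')) = 0 := by
    intro h x
    have h1 := congrFun hMd (Sum.inl (h, x))
    simp only [Matrix.mulVec, dotProduct, Pi.zero_apply] at h1
    have h2 : (∑ h' : Fin H, ∑ x' : S, ∑ a' : A,
        ((if h' = h then (if x' = x then (1:ℝ) else 0) else 0)
          - (if (h:ℕ) = (h':ℕ) + 1 then P h' x' a' x else 0)) * d (h', x', a'))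
        = ∑ p : Fin H × S × A, M (Sum.inl (h, x)) p * d p := by
      rw [Fintype.sum_prod_type]
      refine Finset.sum_congr rfl fun h' _ => ?_
      rw [Fintype.sum_prod_type]
    rw [h2]
    exact h1
  have hD0 : ∀ x : S, ∑ a : A, d (⟨0, by omega⟩, x, a) = 0 := by
    intro x
    have key := hrow ⟨0, by omega⟩ x
    have split : (∑ h' : Fin H, ∑ x' : S, ∑ a' : A,
        ((if h' = (⟨0, by omega⟩ : Fin H) then (if x' = x then (1:ℝ) else 0) else 0)
          - (if (((⟨0, by omega⟩ : Fin H)):ℕ) = (h':ℕ) + 1 then P h' x' a' x else 0)) * d (h', x', a'))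
        = ∑ a : A, d (⟨0, by omega⟩, x, a) := by
      simp only [sub_mul, Finset.sum_sub_distrib]
      have p2 : (∑ h' : Fin H, ∑ x' : S, ∑ a' : A,
          (if (((⟨0, by omega⟩ : Fin H)):ℕ) = (h':ℕ) + 1 then P h' x' a' x else 0) * d (h', x', a')) = 0 := by
        apply Finset.sum_eq_zero; intro h' _
        apply Finset.sum_eq_zero; intro x' _
        apply Finset.sum_eq_zero; intro a' _
        rw [if_neg, zero_mul]
        intro hc
        have hc2 : (0:ℕ) = (h':ℕ) + 1 := hc
        omega
      rw [p2, sub_zero]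
      rw [Finset.sum_eq_single (⟨0, by omega⟩ : Fin H)]
      · simp only [if_pos rfl]
        rw [Finset.sum_eq_single x]
        · apply Finset.sum_congr rfl; intro a _; simp
        · intro x' _ hx'; apply Finset.sum_eq_zero; intro a' _; simp [hx']
        · simp
      · intro h' _ hh'
        apply Finset.sum_eq_zero; intro x' _
        apply Finset.sum_eq_zero; intro a' _
        simp [hh']
      · simp
    rw [split] at key
    exact key
  have hD1 : ∀ (h : Fin H) (hh : (h:ℕ) + 1 < H) (x : S),
      ∑ a : A, d (⟨(h:ℕ) + 1, hh⟩, x, a)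
        = ∑ x' : S, ∑ a' : A, P h x' a' x * d (h, x', a') := by
    intro h hh x
    have key := hrow ⟨(h:ℕ)+1, hh⟩ x
    have split : (∑ h' : Fin H, ∑ x' : S, ∑ a' : A,
        ((if h' = ⟨(h:ℕ)+1, hh⟩ then (if x' = x then (1:ℝ) else 0) else 0)
          - (if ((⟨(h:ℕ)+1, hh⟩ : Fin H):ℕ) = (h':ℕ) + 1 then P h' x' a' x else 0)) * d (h', x', a'))
        = (∑ a : A, d (⟨(h:ℕ) + 1, hh⟩, x, a))
          - ∑ x' : S, ∑ a' : A, P h x' a' x * d (h, x', a') := by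
      simp only [sub_mul, Finset.sum_sub_distrib]
      congr 1
      · rw [Finset.sum_eq_single (⟨(h:ℕ)+1, hh⟩ : Fin H)]
        · simp only [if_pos rfl]
          rw [Finset.sum_eq_single x]
          · apply Finset.sum_congr rfl; intro a _; simp
          · intro x' _ hx'; simp [hx']
          · simp
        · intro h' _ hh'
          apply Finset.sum_eq_zero; intro x' _
          apply Finset.sum_eq_zero; intro a' _
          simp [hh']
        · simp
      · rw [Finset.sum_eq_single h]
        · simp
        · intro h' _ hh'
          apply Finset.sum_eq_zero; intro x' _
          apply Finset.sum_eq_zero; intro a' _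
          rw [if_neg, zero_mul]
          intro hcontra
          have hc2 : (h:ℕ) + 1 = (h':ℕ) + 1 := hcontra
          exact hh' (Fin.ext (by omega))
        · simp
    rw [split] at key
    linarith
  have hDn : ∀ n : Fin N,
      ∑ h : Fin H, ∑ x : S, ∑ a : A, d (h, x, a) * g n h x a = 0 := by
    intro n
    have h1 := congrFun hMd (Sum.inr n)
    simp only [Matrix.mulVec, dotProduct, Pi.zero_apply] at h1
    have h2 : (∑ h : Fin H, ∑ x : S, ∑ a : A, d (h, x, a) * g n h x a)
        = ∑ p : Fin H × S × A, M (Sum.inr n) p * d p := by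
      rw [Fintype.sum_prod_type]
      refine Finset.sum_congr rfl fun h _ => ?_
      rw [Fintype.sum_prod_type]
      refine Finset.sum_congr rfl fun x _ => ?_
      refine Finset.sum_congr rfl fun a _ => mul_comm _ _
    rw [h2]
    exact h1
  -- epsilon
  set dq : Fin H → S → A → ℝ := fun h x a => d (h, x, a) with hdq
  set u : Finset (Fin H × S × A) := Finset.univ.filter (fun p => d p ≠ 0) with hu
  have hune : u.Nonempty := by
    obtain ⟨p, hp⟩ := hdne
    exact ⟨p, by simp [hu, hp]⟩
  set ε : ℝ := u.inf' hune (fun p => qstar p.1 p.2.1 p.2.2 / |d p|) with hε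
  have hqpos : ∀ p ∈ u, 0 < qstar p.1 p.2.1 p.2.2 := by
    intro p hp
    rw [hu, Finset.mem_filter] at hp
    have hdp : d p ≠ 0 := hp.2
    have hpT : p ∈ T' := by
      by_contra hmem
      exact hdp (hdzero p hmem)
    have hps : p ∈ supp := hT'sub hpT
    rw [hsupp, Finset.mem_filter] at hps
    exact lt_of_le_of_ne (hq0 _ _ _) (Ne.symm hps.2)
  have hεpos : 0 < ε := by
    rw [hε, Finset.lt_inf'_iff]
    intro p hp
    have h1 := hqpos p hp
    have h2 : 0 < |d p| := by
      rw [hu, Finset.mem_filter] at hp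
      exact abs_pos.2 hp.2
    positivity
  have hbound : ∀ p : Fin H × S × A, ε * |d p| ≤ qstar p.1 p.2.1 p.2.2 := by
    intro p
    by_cases hdp : d p = 0
    · simp [hdp]; exact hq0 _ _ _
    · have hp : p ∈ u := by simp [hu, hdp]
      have h1 := Finset.inf'_le (fun p => qstar p.1 p.2.1 p.2.2 / |d p|) hp
      have h2 : 0 < |d p| := abs_pos.2 hdp
      rw [le_div_iff₀ h2] at h1
      exact h1
  -- membership
  have hmem : ∀ t : ℝ, |t| ≤ ε → (qstar + t • dq) ∈ F := by
    intro t ht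
    rw [hF]
    refine ⟨?_, ?_, ?_, ?_, ?_⟩
    · intro h x a
      have hb : |t * d (h, x, a)| ≤ qstar h x a := by
        rw [abs_mul]
        calc |t| * |d (h, x, a)| ≤ ε * |d (h, x, a)| := by
              apply mul_le_mul_of_nonneg_right ht (abs_nonneg _)
          _ ≤ qstar h x a := hbound (h, x, a)
      have : -(qstar h x a) ≤ t * d (h, x, a) := by
        have := neg_abs_le (t * d (h, x, a))
        linarith
      simp only [Pi.add_apply, Pi.smul_apply, smul_eq_mul, hdq]
      linarith
    · intro n
      have expand : ∑ h : Fin H, ∑ x : S, ∑ a : A,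
          (qstar + t • dq) h x a * g n h x a
          = (∑ h : Fin H, ∑ x : S, ∑ a : A, qstar h x a * g n h x a)
            + t * (∑ h : Fin H, ∑ x : S, ∑ a : A, d (h, x, a) * g n h x a) := by
        rw [Finset.mul_sum, ← Finset.sum_add_distrib]
        apply Finset.sum_congr rfl; intro h _
        rw [Finset.mul_sum, ← Finset.sum_add_distrib]
        apply Finset.sum_congr rfl; intro x _
        rw [Finset.mul_sum, ← Finset.sum_add_distrib]
        apply Finset.sum_congr rfl; intro a _
        simp only [Pi.add_apply, Pi.smul_apply, smul_eq_mul, hdq]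
        ring
      rw [expand, hDn n]
      simpa using hqρ n
    · intro h hh x
      have e1 : ∑ a : A, (qstar + t • dq) ⟨(h:ℕ)+1, hh⟩ x a
          = (∑ a : A, qstar ⟨(h:ℕ)+1, hh⟩ x a) + t * (∑ a : A, d (⟨(h:ℕ)+1, hh⟩, x, a)) := by
        rw [Finset.mul_sum, ← Finset.sum_add_distrib]
        apply Finset.sum_congr rfl; intro a _
        simp [hdq]
      have e2 : ∑ x' : S, ∑ a' : A, P h x' a' x * (qstar + t • dq) h x' a'
          = (∑ x' : S, ∑ a' : A, P h x' a' x * qstar h x' a')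
            + t * (∑ x' : S, ∑ a' : A, P h x' a' x * d (h, x', a')) := by
        rw [Finset.mul_sum, ← Finset.sum_add_distrib]
        apply Finset.sum_congr rfl; intro x' _
        rw [Finset.mul_sum, ← Finset.sum_add_distrib]
        apply Finset.sum_congr rfl; intro a' _
        simp only [Pi.add_apply, Pi.smul_apply, smul_eq_mul, hdq]
        ring
      rw [e1, e2, hqflow h hh x, hD1 h hh x]
    · have e1 : ∑ a : A, (qstar + t • dq) ⟨0, by omega⟩ xini a
          = (∑ a : A, qstar ⟨0, by omega⟩ xini a) + t * (∑ a : A, d (⟨0, by omega⟩, xini, a)) := by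
        rw [Finset.mul_sum, ← Finset.sum_add_distrib]
        apply Finset.sum_congr rfl; intro a _
        simp [hdq]
      rw [e1, hqini.1, hD0 xini, mul_zero, add_zero]
    · intro x hx
      have e1 : ∑ a : A, (qstar + t • dq) ⟨0, by omega⟩ x a
          = (∑ a : A, qstar ⟨0, by omega⟩ x a) + t * (∑ a : A, d (⟨0, by omega⟩, x, a)) := by
        rw [Finset.mul_sum, ← Finset.sum_add_distrib]
        apply Finset.sum_congr rfl; intro a _
        simp [hdq]
      rw [e1, hqini.2 x hx, hD0 x, mul_zero, add_zero]
  -- contradiction with extreme point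
  have hy := hmem ε (by rw [abs_of_pos hεpos])
  have hz := hmem (-ε) (by rw [abs_neg, abs_of_pos hεpos])
  have hseg : qstar ∈ openSegment ℝ (qstar + ε • dq) (qstar + (-ε) • dq) := by
    refine ⟨1/2, 1/2, by norm_num, by norm_num, by norm_num, ?_⟩
    module
  have hy1 := hqstar.2 hy hz hseg
  have hdq0 : dq = 0 := by
    have : ε • dq = 0 := by
      have := hy1
      have h2 : qstar + ε • dq = qstar + 0 := by rw [add_zero]; exact this
      exact add_left_cancel h2
    rcases smul_eq_zero.1 this with h | h
    · exact absurd h (ne_of_gt hεpos)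
    · exact h
  obtain ⟨p, hp⟩ := hdne
  apply hp
  have : dq p.1 p.2.1 p.2.2 = 0 := by rw [hdq0]; rfl
  rw [hdq] at this
  exact this
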